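/- Let d ≥ 1, let A be a symmetric positive definite d×d real matrix, let t ≥ 1, and let x_1, …, x_t ∈ ℝ^d be vectors with x_sᵀ A⁻¹ x_s ≤ 1 for every s ∈ [t]. Then det( Σ_{s=1}^t x_s x_sᵀ ) ≤ (t/d)^d · det(A). -/

import Mathlib

open Matrix

lemma amgm_prod_le (d : ℕ) (f : Fin d → ℝ) (hf : ∀ i, 0 ≤ f i) (hd : 1 ≤ d) :
    ∏ i, f i ≤ ((∑ i, f i) / d) ^ d := by
  have hd' : (0:ℝ) < d := by positivity
  have key := Real.geom_mean_le_arith_mean_weighted Finset.univ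
      (fun _ => 1 / (d:ℝ)) f (fun i _ => by positivity)
      (by simp [Finset.sum_const, mul_comm]; field_simp) (fun i _ => hf i)
  have hL : ∏ i, f i ^ (1 / (d:ℝ)) = (∏ i, f i) ^ (1 / (d:ℝ)) := by
    rw [← Real.finset_prod_rpow _ _ (fun i _ => hf i)]
  have hR : ∑ i, (1 / (d:ℝ)) * f i = (∑ i, f i) / d := by
    rw [← Finset.mul_sum]; ring
  rw [hL, hR] at key
  have hp : (0:ℝ) ≤ ∏ i, f i := Finset.prod_nonneg fun i _ => hf i
  calc ∏ i, f i = ((∏ i, f i) ^ (1 / (d:ℝ))) ^ (d:ℕ) := by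
        rw [← Real.rpow_natCast ((∏ i, f i) ^ (1/(d:ℝ))), ← Real.rpow_mul hp]
        field_simp
        simp
    _ ≤ ((∑ i, f i) / d) ^ d := pow_le_pow_left₀ (Real.rpow_nonneg hp _) key d

lemma trace_eq_sum_eigs {d : ℕ} {M : Matrix (Fin d) (Fin d) ℝ} (hM : M.IsHermitian) :
    M.trace = ∑ i, hM.eigenvalues i := by
  simpa using hM.trace_eq_sum_eigenvalues

lemma posSemidef_vecMulVec' {d : ℕ} (v : Fin d → ℝ) : (vecMulVec v v).PosSemidef := by
  rw [posSemidef_iff_dotProduct_mulVec]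
  constructor
  · ext i j
    simp [vecMulVec_apply, conjTranspose_apply, mul_comm]
  · intro w
    have h1 : vecMulVec v v *ᵥ w = fun i => v i * (v ⬝ᵥ w) := by
      ext i
      simp [vecMulVec_apply, mulVec, dotProduct, Finset.mul_sum, mul_assoc]
    have h2 : star w ⬝ᵥ (fun i => v i * (v ⬝ᵥ w)) = (v ⬝ᵥ w) * (v ⬝ᵥ w) := by
      simp only [dotProduct, star_trivial, Pi.star_apply]
      rw [Finset.sum_mul]
      exact Finset.sum_congr rfl fun i _ => by ring
    rw [h1, h2]
    exact mul_self_nonneg _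

lemma trace_vecMulVec' {d : ℕ} (v : Fin d → ℝ) : (vecMulVec v v).trace = v ⬝ᵥ v := by
  simp [Matrix.trace, vecMulVec_apply, dotProduct, Matrix.diag]

lemma conj_vecMulVec {d : ℕ} (B : Matrix (Fin d) (Fin d) ℝ) (hB : Bᵀ = B) (v : Fin d → ℝ) :
    B * vecMulVec v v * B = vecMulVec (B *ᵥ v) (B *ᵥ v) := by
  rw [vecMulVec_eq (Fin 1), vecMulVec_eq (Fin 1), Matrix.replicateCol_mulVec]
  rw [show (B *ᵥ v) = v ᵥ* B by rw [← mulVec_transpose, hB]]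
  rw [Matrix.replicateRow_vecMul]
  simp only [Matrix.mul_assoc]

lemma det_le_pow_trace_div {d : ℕ} (hd : 1 ≤ d) {M : Matrix (Fin d) (Fin d) ℝ}
    (hM : M.PosSemidef) : M.det ≤ (M.trace / d) ^ d := by
  have hdet : M.det = ∏ i, hM.1.eigenvalues i := by
    rw [hM.1.det_eq_prod_eigenvalues]; norm_num
  rw [hdet, trace_eq_sum_eigs hM.1]
  exact amgm_prod_le d _ (hM.eigenvalues_nonneg) hd

open scoped MatrixOrder in
lemma exists_psd_sqrt {d : ℕ} {P : Matrix (Fin d) (Fin d) ℝ} (hP : P.PosSemidef) :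
    ∃ B : Matrix (Fin d) (Fin d) ℝ, B.PosSemidef ∧ B * B = P :=
  ⟨CFC.sqrt P, Matrix.nonneg_iff_posSemidef.mp (CFC.sqrt_nonneg P),
    CFC.sqrt_mul_sqrt_self P (Matrix.nonneg_iff_posSemidef.mpr hP)⟩

/-- Determinant bound for a design matrix whose vectors have bounded `A`-leverage. -/
theorem det_le_of_leverage_le_one (d t : ℕ) (hd : 1 ≤ d) (ht : 1 ≤ t)
    (A : Matrix (Fin d) (Fin d) ℝ) (hA : A.PosDef)
    (x : ℕ → Fin d → ℝ)
    (hx : ∀ s ∈ Finset.Icc 1 t, x s ⬝ᵥ A⁻¹ *ᵥ x s ≤ 1) :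
    (∑ s ∈ Finset.Icc 1 t, Matrix.vecMulVec (x s) (x s)).det
      ≤ ((t : ℝ) / d) ^ d * A.det := by
  set S := ∑ s ∈ Finset.Icc 1 t, Matrix.vecMulVec (x s) (x s) with hS
  have hP : (A⁻¹).PosSemidef := hA.inv.posSemidef
  obtain ⟨B, hB, hBB⟩ := exists_psd_sqrt hP
  have hBs : Bᵀ = B := by
    rw [← Matrix.conjTranspose_eq_transpose_of_trivial]; exact hB.1
  set M := B * S * B with hMdef
  have hMsum : M = ∑ s ∈ Finset.Icc 1 t, vecMulVec (B *ᵥ x s) (B *ᵥ x s) := by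
    rw [hMdef, hS, Finset.mul_sum, Finset.sum_mul]
    exact Finset.sum_congr rfl fun s _ => conj_vecMulVec B hBs (x s)
  have hMpsd : M.PosSemidef := by
    rw [hMsum]
    exact Finset.sum_induction _ _ (fun a b ha hb => ha.add hb) .zero
      (fun s _ => posSemidef_vecMulVec' _)
  -- each leverage term
  have hterm : ∀ s ∈ Finset.Icc 1 t, (B *ᵥ x s) ⬝ᵥ (B *ᵥ x s) ≤ 1 := by
    intro s hs
    have : (B *ᵥ x s) ⬝ᵥ (B *ᵥ x s) = x s ⬝ᵥ A⁻¹ *ᵥ x s := by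
      nth_rewrite 1 [show B *ᵥ x s = x s ᵥ* B by rw [← mulVec_transpose, hBs]]
      rw [dotProduct_mulVec, vecMul_vecMul, hBB, ← dotProduct_mulVec]
    rw [this]
    exact hx s hs
  have htrace : M.trace ≤ (t : ℝ) := by
    rw [hMsum, Matrix.trace_sum]
    calc ∑ s ∈ Finset.Icc 1 t, (vecMulVec (B *ᵥ x s) (B *ᵥ x s)).trace
        = ∑ s ∈ Finset.Icc 1 t, (B *ᵥ x s) ⬝ᵥ (B *ᵥ x s) := by
          exact Finset.sum_congr rfl fun s _ => trace_vecMulVec' _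
      _ ≤ ∑ s ∈ Finset.Icc 1 t, (1:ℝ) := Finset.sum_le_sum hterm
      _ = (t : ℝ) := by simp [Nat.card_Icc]
  have htr0 : 0 ≤ M.trace := by
    rw [hMsum, Matrix.trace_sum]
    refine Finset.sum_nonneg fun s _ => ?_
    rw [trace_vecMulVec']
    exact Finset.sum_nonneg fun i _ => mul_self_nonneg _
  have hdetM : M.det ≤ ((t:ℝ) / d) ^ d := by
    calc M.det ≤ (M.trace / d) ^ d := det_le_pow_trace_div hd hMpsd
      _ ≤ ((t:ℝ) / d) ^ d := by
          apply pow_le_pow_left₀ (by positivity)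
          exact div_le_div_of_nonneg_right htrace (by positivity) -- wrong lemma maybe
  have hdetS : S.det = M.det * A.det := by
    have hdA : (0:ℝ) < A.det := hA.det_pos
    have : M.det = B.det * S.det * B.det := by rw [hMdef, Matrix.det_mul, Matrix.det_mul]
    have hBB' : B.det * B.det = (A.det)⁻¹ := by
      rw [← Matrix.det_mul, hBB, Matrix.det_nonsing_inv, Ring.inverse_eq_inv]
    calc S.det = S.det * (B.det * B.det * A.det) := by rw [hBB']; field_simp
      _ = M.det * A.det := by rw [this]; ring
  rw [hdetS]
  exact mul_le_mul_of_nonneg_right hdetM hA.det_pos.le
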